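/- Let D be a real m×n matrix and let A be a real n×n matrix that is symmetric and idempotent (A = Aᵀ and A A = A) with rank(A) = k. Suppose θ₁, …, θ_p are real m-vectors and σ₁, …, σ_p are nonzero real numbers satisfying the generalized eigenvalue equations D A Dᵀ θᵢ = σᵢ D Dᵀ θᵢ for all i, and suppose the vectors D Dᵀ θ₁, …, D Dᵀ θ_p are linearly independent. Then p ≤ k. In particular, the dimension of the feature space obtained by embedding the graph A (the number of generalized eigenvectors with nonzero eigenvalue) is at most the rank k of A. -/

import Mathlib

open Matrix

/-- Let D be a real m×n matrix and A a real n×n symmetric idempotent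
matrix of rank k. If θ₁,…,θ_p are real m-vectors and σ₁,…,σ_p are nonzero reals
with D A Dᵀ θᵢ = σᵢ D Dᵀ θᵢ for all i, and the vectors D Dᵀ θ₁,…,D Dᵀ θ_p are
linearly independent, then p ≤ k. In particular, the feature dimension obtained
by embedding the graph A is at most the rank k of A. -/
theorem stmt_13 {m n p k : ℕ}
    (D : Matrix (Fin m) (Fin n) ℝ)
    (A : Matrix (Fin n) (Fin n) ℝ)
    (hAsymm : A = Aᵀ) (hAidem : A * A = A)
    (hArank : A.rank = k)
    (θ : Fin p → (Fin m → ℝ)) (σ : Fin p → ℝ)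
    (hσ : ∀ i : Fin p, σ i ≠ 0)
    (heig : ∀ i : Fin p, (D * A * Dᵀ) *ᵥ θ i = σ i • ((D * Dᵀ) *ᵥ θ i))
    (hindep : LinearIndependent ℝ (fun i : Fin p => (D * Dᵀ) *ᵥ θ i)) :
    p ≤ k := by
  set W := LinearMap.range (D * A).mulVecLin with hW
  have hmem : ∀ i, (D * Dᵀ) *ᵥ θ i ∈ W := by
    intro i
    refine ⟨(σ i)⁻¹ • (Dᵀ *ᵥ θ i), ?_⟩
    have h1 : (D * A) *ᵥ (Dᵀ *ᵥ θ i) = σ i • ((D * Dᵀ) *ᵥ θ i) := by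
      rw [Matrix.mulVec_mulVec]; exact heig i
    simp only [mulVecLin_apply, Matrix.mulVec_smul, h1, smul_smul,
      inv_mul_cancel₀ (hσ i), one_smul]
  have hindep' : LinearIndependent ℝ (fun i : Fin p => (⟨(D * Dᵀ) *ᵥ θ i, hmem i⟩ : W)) := by
    apply LinearIndependent.of_comp W.subtype
    exact hindep
  have h1 : p ≤ Module.finrank ℝ W := by
    simpa using hindep'.fintype_card_le_finrank
  have h2 : (D * A).rank ≤ A.rank := Matrix.rank_mul_le_right D A
  calc p ≤ Module.finrank ℝ W := h1
    _ = (D * A).rank := rfl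
    _ ≤ A.rank := h2
    _ = k := hArank
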